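/- arXiv:2311.13349 — 6 statements merged into one kernel-verified Lean document; each statement's English description precedes it below -/
import Mathlib

section
/- Let items have profits p_i ≥ 0 and weights w_i with 0 < w_i ≤ c/2 for all i. Let Opt_c be the optimal profit of a 0-1 knapsack with capacity c, and let Opt_{c/2} be the optimal profit with capacity c/2 achieved by item set S. Let A be the optimal profit of the knapsack with capacity c − w(S) restricted to items not in S. Then P(S) + A ≥ (2/3)·Opt_c. -/
/-- Bottom-up iterative knapsack heuristic achieves at least 2/3 of the optimum
when all item weights are at most `c/2`. -/
theorem bottom_up_two_thirds {ι : Type*} [Fintype ι] [DecidableEq ι]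
    (p w : ι → ℝ) (c : ℝ)
    (hp : ∀ i, 0 ≤ p i) (hw : ∀ i, 0 < w i) (hwc : ∀ i, w i ≤ c / 2)
    -- S : optimal solution set for capacity c/2
    (S : Finset ι)
    (hSfeas : ∑ i ∈ S, w i ≤ c / 2)
    (hSopt : ∀ U : Finset ι, ∑ i ∈ U, w i ≤ c / 2 → ∑ i ∈ U, p i ≤ ∑ i ∈ S, p i)
    -- A : optimal profit of the residual knapsack on items not in S with capacity c - w(S)
    (A : ℝ) (B : Finset ι)
    (hBdisj : Disjoint B S)
    (hBfeas : ∑ i ∈ B, w i ≤ c - ∑ i ∈ S, w i)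
    (hAB : A = ∑ i ∈ B, p i)
    (hAopt : ∀ B' : Finset ι, Disjoint B' S → ∑ i ∈ B', w i ≤ c - ∑ i ∈ S, w i →
      ∑ i ∈ B', p i ≤ A)
    -- Opt_c : optimal profit for capacity c
    (Optc : ℝ) (T : Finset ι)
    (hTfeas : ∑ i ∈ T, w i ≤ c)
    (hTval : Optc = ∑ i ∈ T, p i)
    (hTopt : ∀ U : Finset ι, ∑ i ∈ U, w i ≤ c → ∑ i ∈ U, p i ≤ Optc) :
    ∑ i ∈ S, p i + A ≥ (2 / 3) * Optc := by
  classical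
  -- residual capacity is nonnegative
  have hρ0 : (0:ℝ) ≤ c - ∑ i ∈ S, w i :=
    le_trans (Finset.sum_nonneg fun i _ => (hw i).le) hBfeas
  -- profit of T ∩ S is at most p(S)
  have hσ : ∑ i ∈ T ∩ S, p i ≤ ∑ i ∈ S, p i := by
    apply hSopt
    calc ∑ i ∈ T ∩ S, w i ≤ ∑ i ∈ S, w i :=
          Finset.sum_le_sum_of_subset_of_nonneg Finset.inter_subset_right
            (fun i _ _ => (hw i).le)
      _ ≤ c / 2 := hSfeas
  have hTsplitp : ∑ i ∈ T ∩ S, p i + ∑ i ∈ T \ S, p i = ∑ i ∈ T, p i :=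
    Finset.sum_inter_add_sum_sdiff T S p
  have hTsplitw : ∑ i ∈ T ∩ S, w i + ∑ i ∈ T \ S, w i = ∑ i ∈ T, w i :=
    Finset.sum_inter_add_sum_sdiff T S w
  have hopt0 : 0 ≤ Optc := by
    rw [hTval]; exact Finset.sum_nonneg fun i _ => hp i
  by_cases hcase : ∑ i ∈ T \ S, w i ≤ c - ∑ i ∈ S, w i
  · -- Case A : T \ S fits in the residual capacity
    have hA : ∑ i ∈ T \ S, p i ≤ A := hAopt _ Finset.sdiff_disjoint hcase
    have : Optc ≤ ∑ i ∈ S, p i + A := by rw [hTval, ← hTsplitp]; linarith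
    linarith
  · -- Case B : T \ S exceeds the residual capacity
    push_neg at hcase
    -- pick a maximal-weight feasible F ⊆ T \ S
    obtain ⟨F, hFmem, hFmax⟩ := Finset.exists_max_image
      ((T \ S).powerset.filter fun F => ∑ i ∈ F, w i ≤ c - ∑ i ∈ S, w i)
      (fun F => ∑ i ∈ F, w i)
      ⟨∅, by simp [hρ0]⟩
    simp only [Finset.mem_filter, Finset.mem_powerset] at hFmem
    obtain ⟨hFD, hFw⟩ := hFmem
    have hFne : F ≠ T \ S := by
      rintro rfl; exact absurd hFw (not_le.mpr hcase)
    obtain ⟨j, hjD, hjF⟩ : ∃ j ∈ T \ S, j ∉ F := by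
      by_contra h
      push_neg at h
      exact hFne (Finset.Subset.antisymm hFD h)
    -- by maximality, F ∪ {j} does not fit in the residual capacity
    have hjw : c - ∑ i ∈ S, w i < ∑ i ∈ F, w i + w j := by
      by_contra h
      push_neg at h
      have hmem : insert j F ∈
          ((T \ S).powerset.filter fun F => ∑ i ∈ F, w i ≤ c - ∑ i ∈ S, w i) := by
        simp only [Finset.mem_filter, Finset.mem_powerset]
        constructor
        · exact Finset.insert_subset hjD hFD
        · rw [Finset.sum_insert hjF]; linarith
      have := hFmax _ hmem
      rw [Finset.sum_insert hjF] at this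
      linarith [hw j]
    -- the remainder R := (T \ S) \ F
    set R : Finset ι := (T \ S) \ F with hRdef
    have hjR : j ∈ R := Finset.mem_sdiff.mpr ⟨hjD, hjF⟩
    have hRw : ∑ i ∈ R, w i + ∑ i ∈ F, w i = ∑ i ∈ T \ S, w i := Finset.sum_sdiff hFD
    have hRp : ∑ i ∈ R, p i + ∑ i ∈ F, p i = ∑ i ∈ T \ S, p i := Finset.sum_sdiff hFD
    have hRew : ∑ i ∈ R.erase j, w i + w j = ∑ i ∈ R, w i := Finset.sum_erase_add R w hjR
    have hRep : ∑ i ∈ R.erase j, p i + p j = ∑ i ∈ R, p i := Finset.sum_erase_add R p hjR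
    -- V := (R.erase j) ∪ (T ∩ S) is feasible for capacity c/2
    have hdisjV : Disjoint (R.erase j) (T ∩ S) := by
      refine Finset.disjoint_left.mpr fun a ha hb => ?_
      have haD : a ∈ T \ S := (Finset.sdiff_subset) (Finset.erase_subset _ _ ha)
      exact (Finset.mem_sdiff.mp haD).2 (Finset.mem_inter.mp hb).2
    have hVw : ∑ i ∈ (R.erase j) ∪ (T ∩ S), w i
        = ∑ i ∈ R.erase j, w i + ∑ i ∈ T ∩ S, w i := Finset.sum_union hdisjV
    have hVp : ∑ i ∈ (R.erase j) ∪ (T ∩ S), p i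
        = ∑ i ∈ R.erase j, p i + ∑ i ∈ T ∩ S, p i := Finset.sum_union hdisjV
    have hSw : ∑ i ∈ S, w i ≤ c / 2 := hSfeas
    have hVfeas : ∑ i ∈ (R.erase j) ∪ (T ∩ S), w i ≤ c / 2 := by
      rw [hVw]; linarith
    have hsV : ∑ i ∈ (R.erase j) ∪ (T ∩ S), p i ≤ ∑ i ∈ S, p i := hSopt _ hVfeas
    -- A ≥ p(F)
    have hAF : ∑ i ∈ F, p i ≤ A := by
      apply hAopt _ _ hFw
      exact Finset.disjoint_of_subset_left hFD Finset.sdiff_disjoint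
    -- A ≥ p j and s ≥ p j
    have hjw2 : w j ≤ c / 2 := hwc j
    have hjA : p j ≤ A := by
      have : ∑ i ∈ ({j} : Finset ι), p i ≤ A := by
        apply hAopt
        · exact Finset.disjoint_of_subset_left
            (Finset.singleton_subset_iff.mpr hjD) Finset.sdiff_disjoint
        · rw [Finset.sum_singleton]; linarith
      rwa [Finset.sum_singleton] at this
    have hjs : p j ≤ ∑ i ∈ S, p i := by
      have : ∑ i ∈ ({j} : Finset ι), p i ≤ ∑ i ∈ S, p i := by
        apply hSopt
        rw [Finset.sum_singleton]; linarith
      rwa [Finset.sum_singleton] at this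
    rw [hVp] at hsV
    rw [hTval, ← hTsplitp]
    linarith
end

section
/- Let items have profits p_i ≥ 0 and weights 0 < w_i ≤ c/2. Let T be an optimal solution set for the knapsack with capacity c. Let D be the optimal profit of the knapsack with capacity c/2 restricted to items in T. Then D ≥ (1/2)·Opt_{c/2}, where Opt_{c/2} is the optimal profit of the unrestricted knapsack with capacity c/2. -/
/-- Top-down iterative knapsack heuristic achieves at least 1/2 of the optimum at
capacity `c/2` when all item weights are at most `c/2`. -/
theorem top_down_one_half {ι : Type*} [Fintype ι] [DecidableEq ι]
    (p w : ι → ℝ) (c : ℝ)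
    (hp : ∀ i, 0 ≤ p i) (hw : ∀ i, 0 < w i) (hwc : ∀ i, w i ≤ c / 2)
    -- T : optimal solution set for capacity c
    (T : Finset ι)
    (hTfeas : ∑ i ∈ T, w i ≤ c)
    (hTopt : ∀ U : Finset ι, ∑ i ∈ U, w i ≤ c → ∑ i ∈ U, p i ≤ ∑ i ∈ T, p i)
    -- D : optimal profit for capacity c/2 restricted to the items of T
    (D : ℝ) (E : Finset ι)
    (hET : E ⊆ T)
    (hEfeas : ∑ i ∈ E, w i ≤ c / 2)
    (hDE : D = ∑ i ∈ E, p i)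
    (hDopt : ∀ E' : Finset ι, E' ⊆ T → ∑ i ∈ E', w i ≤ c / 2 → ∑ i ∈ E', p i ≤ D)
    -- Opt_{c/2} : unrestricted optimal profit for capacity c/2
    (Opthalf : ℝ) (Sh : Finset ι)
    (hShfeas : ∑ i ∈ Sh, w i ≤ c / 2)
    (hShval : Opthalf = ∑ i ∈ Sh, p i)
    (hShopt : ∀ U : Finset ι, ∑ i ∈ U, w i ≤ c / 2 → ∑ i ∈ U, p i ≤ Opthalf) :
    D ≥ (1 / 2) * Opthalf := by
  -- basic positivity facts
  have hwnn : ∀ (s : Finset ι), (0:ℝ) ≤ ∑ i ∈ s, w i :=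
    fun s => Finset.sum_nonneg (fun i _ => (hw i).le)
  have hpnn : ∀ (s : Finset ι), (0:ℝ) ≤ ∑ i ∈ s, p i :=
    fun s => Finset.sum_nonneg (fun i _ => hp i)
  have hc : 0 ≤ c := le_trans (hwnn T) hTfeas
  have hD0 : 0 ≤ D := hDE ▸ hpnn E
  set A : Finset ι := Sh ∩ T with hAdef
  set B : Finset ι := Sh \ T with hBdef
  have hAT : A ⊆ T := Finset.inter_subset_right
  -- split Sh sums
  have hSplitP : ∑ i ∈ A, p i + ∑ i ∈ B, p i = ∑ i ∈ Sh, p i :=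
    Finset.sum_inter_add_sum_sdiff Sh T p
  have hSplitW : ∑ i ∈ A, w i + ∑ i ∈ B, w i = ∑ i ∈ Sh, w i :=
    Finset.sum_inter_add_sum_sdiff Sh T w
  have hAle : ∑ i ∈ A, p i ≤ D := by
    refine hDopt A hAT ?_
    have := hwnn B
    linarith
  -- choose a maximum-weight W ⊆ T \ A with w(W) ≤ c - w(Sh)
  have hShc : ∑ i ∈ Sh, w i ≤ c := by linarith
  set S : Finset (Finset ι) :=
    (T \ A).powerset.filter (fun W => ∑ i ∈ W, w i ≤ c - ∑ i ∈ Sh, w i) with hSdef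
  have hSne : S.Nonempty := by
    refine ⟨∅, ?_⟩
    simp [hSdef, hShc, sub_nonneg]
  obtain ⟨W, hWS, hWmax⟩ := S.exists_max_image (fun W => ∑ i ∈ W, w i) hSne
  rw [hSdef, Finset.mem_filter, Finset.mem_powerset] at hWS
  obtain ⟨hWsub, hWw⟩ := hWS
  -- W is disjoint from Sh
  have hWSh : Disjoint W Sh := by
    refine Finset.disjoint_left.2 fun i hiW hiSh => ?_
    have hi := hWsub hiW
    rw [Finset.mem_sdiff] at hi
    exact hi.2 (Finset.mem_inter.2 ⟨hiSh, hi.1⟩)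
  -- exchange: W ∪ Sh is feasible at capacity c
  have hU : ∑ i ∈ W ∪ Sh, p i ≤ ∑ i ∈ T, p i := by
    refine hTopt _ ?_
    rw [Finset.sum_union hWSh]
    linarith
  rw [Finset.sum_union hWSh] at hU
  -- decompose p(T) = p(A) + p(W) + p(Z), Z = (T\A)\W
  set Z : Finset ι := (T \ A) \ W with hZdef
  have hTA : ∑ i ∈ T \ A, p i + ∑ i ∈ A, p i = ∑ i ∈ T, p i := Finset.sum_sdiff hAT
  have hTAZ : ∑ i ∈ Z, p i + ∑ i ∈ W, p i = ∑ i ∈ T \ A, p i := Finset.sum_sdiff hWsub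
  have hTAw : ∑ i ∈ T \ A, w i + ∑ i ∈ A, w i = ∑ i ∈ T, w i := Finset.sum_sdiff hAT
  have hTAZw : ∑ i ∈ Z, w i + ∑ i ∈ W, w i = ∑ i ∈ T \ A, w i := Finset.sum_sdiff hWsub
  have hBZ : ∑ i ∈ B, p i ≤ ∑ i ∈ Z, p i := by linarith
  rcases Z.eq_empty_or_nonempty with hZe | ⟨i, hiZ⟩
  · -- Z empty : p(B) ≤ 0, so Opthalf = p(A) + p(B) ≤ D ≤ 2D
    rw [hZe, Finset.sum_empty] at hBZ
    have := hpnn B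
    rw [ge_iff_le, hShval]
    linarith
  · -- maximality: w(W) + w i > c - w(Sh)
    have hiTA : i ∈ T \ A := (Finset.mem_sdiff.1 hiZ).1
    have hiW : i ∉ W := (Finset.mem_sdiff.1 hiZ).2
    have hmax : c - ∑ j ∈ Sh, w j < ∑ j ∈ W, w j + w i := by
      by_contra h
      push_neg at h
      have hmem : insert i W ∈ S := by
        rw [hSdef, Finset.mem_filter, Finset.mem_powerset]
        constructor
        · exact Finset.insert_subset hiTA hWsub
        · rw [Finset.sum_insert hiW]; linarith
      have := hWmax _ hmem
      simp only [Finset.sum_insert hiW] at this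
      have := hw i
      linarith
    -- p(i) ≤ D
    have hiT : i ∈ T := (Finset.mem_sdiff.1 hiTA).1
    have hiD : p i ≤ D := by
      have := hDopt {i} (Finset.singleton_subset_iff.2 hiT)
        (by simpa using hwc i)
      simpa using this
    -- split Z at i
    have hZi : ∑ j ∈ Z \ {i}, p j + p i = ∑ j ∈ Z, p j := by
      have := Finset.sum_sdiff (f := p) (Finset.singleton_subset_iff.2 hiZ)
      simpa using this
    have hZiw : ∑ j ∈ Z \ {i}, w j + w i = ∑ j ∈ Z, w j := by
      have := Finset.sum_sdiff (f := w) (Finset.singleton_subset_iff.2 hiZ)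
      simpa using this
    -- A ∪ (Z \ {i}) ⊆ T has weight < w(Sh) ≤ c/2
    have hdisj : Disjoint A (Z \ {i}) := by
      refine Finset.disjoint_left.2 fun j hjA hjZ => ?_
      have hj := Finset.mem_sdiff.1 (Finset.mem_sdiff.1 (Finset.mem_sdiff.1 hjZ).1).1
      exact hj.2 hjA
    have hAZsub : A ∪ (Z \ {i}) ⊆ T := by
      refine Finset.union_subset hAT ?_
      intro j hj
      exact (Finset.mem_sdiff.1 ((Finset.mem_sdiff.1 hj).1)).1
        |> fun h => (Finset.mem_sdiff.1 h).1
    have hAZw : ∑ j ∈ A ∪ (Z \ {i}), w j ≤ c / 2 := by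
      rw [Finset.sum_union hdisj]
      linarith
    have hAZD : ∑ j ∈ A, p j + ∑ j ∈ Z \ {i}, p j ≤ D := by
      have := hDopt _ hAZsub hAZw
      rwa [Finset.sum_union hdisj] at this
    rw [ge_iff_le, hShval]
    linarith
end

section
/- The bound 1/2 for the top-down iterative knapsack heuristic is tight: there exists an instance with all weights ≤ c/2 (four items with weights c/3, c/3, c/3, c/2 and profits P+ε, P+ε, P+ε, 2P) where the optimal capacity-c solution is the three items of weight c/3, the restricted capacity-c/2 problem on those items yields profit P+ε, while the unrestricted capacity-c/2 optimum is 2P; hence the ratio tends to 1/2. -/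
lemma sum_fin4 (f : Fin 4 → ℝ) (U : Finset (Fin 4)) :
    ∑ i ∈ U, f i = (if 0 ∈ U then f 0 else 0) + (if 1 ∈ U then f 1 else 0)
      + (if 2 ∈ U then f 2 else 0) + (if 3 ∈ U then f 3 else 0) := by
  have h : ∑ i ∈ Finset.univ, (if i ∈ U then f i else 0) = ∑ i ∈ U, f i := by
    rw [Finset.sum_ite_mem, Finset.univ_inter]
  rw [← h, Fin.sum_univ_four]

/-- Tightness of the 1/2 bound for the top-down iterative knapsack heuristic:
four items of weights `c/3, c/3, c/3, c/2` and profits `P+ε, P+ε, P+ε, 2P`;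
the optimal capacity-`c` solution is `{0,1,2}`, the restricted capacity-`c/2`
optimum on those items is `P+ε`, while the unrestricted capacity-`c/2` optimum is `2P`. -/
theorem top_down_one_half_tight (c P ε : ℝ) (hc : 0 < c) (hP : 0 < P)
    (hε : 0 < ε) (hεP : ε ≤ P) :
    ∃ w p : Fin 4 → ℝ,
      w = ![c / 3, c / 3, c / 3, c / 2] ∧
      p = ![P + ε, P + ε, P + ε, 2 * P] ∧
      (∀ i, 0 < w i ∧ w i ≤ c / 2) ∧ (∀ i, 0 ≤ p i) ∧
      ∃ T : Finset (Fin 4),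
        T = {0, 1, 2} ∧
        -- T is an optimal solution for capacity c
        (∑ i ∈ T, w i ≤ c) ∧
        (∀ U : Finset (Fin 4), ∑ i ∈ U, w i ≤ c → ∑ i ∈ U, p i ≤ ∑ i ∈ T, p i) ∧
        -- restricted capacity-c/2 optimum on items of T has value P + ε
        (∃ E : Finset (Fin 4), E ⊆ T ∧ ∑ i ∈ E, w i ≤ c / 2 ∧
          (∀ E' : Finset (Fin 4), E' ⊆ T → ∑ i ∈ E', w i ≤ c / 2 →
            ∑ i ∈ E', p i ≤ ∑ i ∈ E, p i) ∧
          ∑ i ∈ E, p i = P + ε) ∧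
        -- unrestricted capacity-c/2 optimum has value 2P
        (∃ F : Finset (Fin 4), ∑ i ∈ F, w i ≤ c / 2 ∧
          (∀ U : Finset (Fin 4), ∑ i ∈ U, w i ≤ c / 2 →
            ∑ i ∈ U, p i ≤ ∑ i ∈ F, p i) ∧
          ∑ i ∈ F, p i = 2 * P) := by
  refine ⟨![c / 3, c / 3, c / 3, c / 2], ![P + ε, P + ε, P + ε, 2 * P], rfl, rfl, ?_, ?_,
    {0, 1, 2}, rfl, ?_, ?_, ⟨{0}, ?_, ?_, ?_, ?_⟩, ⟨{3}, ?_, ?_, ?_⟩⟩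
  · intro i
    fin_cases i <;> simp <;> first | (constructor <;> linarith) | linarith
  · intro i
    fin_cases i <;> simp <;> linarith
  · rw [sum_fin4]; simp; linarith
  · intro U hU
    rw [sum_fin4] at hU ⊢
    rw [sum_fin4 (f := ![P + ε, P + ε, P + ε, 2 * P]) ({0,1,2} : Finset (Fin 4))]
    simp only [Matrix.cons_val_zero, Matrix.cons_val_one, Matrix.head_cons] at *
    simp only [show ((0:Fin 4) ∈ ({0,1,2} : Finset (Fin 4))) = True by simp,
      show ((1:Fin 4) ∈ ({0,1,2} : Finset (Fin 4))) = True by simp,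
      show ((2:Fin 4) ∈ ({0,1,2} : Finset (Fin 4))) = True by simp,
      show ((3:Fin 4) ∈ ({0,1,2} : Finset (Fin 4))) = False by decide, if_true, if_false] at *
    split_ifs at hU ⊢ <;> simp_all <;> linarith
  · decide
  · rw [sum_fin4]; simp; linarith
  · intro E' hsub hE'
    have h3 : (3 : Fin 4) ∉ E' := fun h => by have := hsub h; simp at this
    rw [sum_fin4] at hE' ⊢
    rw [sum_fin4 (f := ![P + ε, P + ε, P + ε, 2 * P]) ({0} : Finset (Fin 4))]
    simp only [Matrix.cons_val_zero, Matrix.cons_val_one, Matrix.head_cons, h3, if_false] at *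
    simp only [show ((0:Fin 4) ∈ ({0} : Finset (Fin 4))) = True by simp,
      show ((1:Fin 4) ∈ ({0} : Finset (Fin 4))) = False by decide,
      show ((2:Fin 4) ∈ ({0} : Finset (Fin 4))) = False by decide,
      show ((3:Fin 4) ∈ ({0} : Finset (Fin 4))) = False by decide, if_true, if_false] at *
    split_ifs at hE' ⊢ <;> simp_all <;> linarith
  · rw [sum_fin4]; simp
  · rw [sum_fin4]; simp
  · intro U hU
    rw [sum_fin4] at hU ⊢
    rw [sum_fin4 (f := ![P + ε, P + ε, P + ε, 2 * P]) ({3} : Finset (Fin 4))]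
    simp only [Matrix.cons_val_zero, Matrix.cons_val_one, Matrix.head_cons] at *
    simp only [show ((0:Fin 4) ∈ ({3} : Finset (Fin 4))) = False by decide,
      show ((1:Fin 4) ∈ ({3} : Finset (Fin 4))) = False by decide,
      show ((2:Fin 4) ∈ ({3} : Finset (Fin 4))) = False by decide,
      show ((3:Fin 4) ∈ ({3} : Finset (Fin 4))) = True by simp, if_true, if_false] at *
    split_ifs at hU ⊢ <;> simp_all <;> linarith
  · rw [sum_fin4]; simp
end

section
/- Let T be an optimal knapsack solution for capacity c with item weights ≤ c/2, and partition T into three parts D1, D2, D3 each of total weight ≤ c/2, where D3 is disjoint from an optimal capacity-c/2 solution S of the full instance. Then max(P(D1), P(D2), P(D3)) ≥ (1/2)·P(S). -/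
/-- Three-part decomposition inequality for the top-down analysis. -/
theorem three_part_max_ge_half {ι : Type*} [Fintype ι] [DecidableEq ι]
    (p w : ι → ℝ) (c : ℝ)
    (hp : ∀ i, 0 ≤ p i) (hw : ∀ i, 0 < w i) (hwc : ∀ i, w i ≤ c / 2)
    -- T : optimal solution set for capacity c
    (T : Finset ι)
    (hTfeas : ∑ i ∈ T, w i ≤ c)
    (hTopt : ∀ U : Finset ι, ∑ i ∈ U, w i ≤ c → ∑ i ∈ U, p i ≤ ∑ i ∈ T, p i)
    -- partition of T into D1, D2, D3, each of weight ≤ c/2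
    (D1 D2 D3 : Finset ι)
    (h12 : Disjoint D1 D2) (h13 : Disjoint D1 D3) (h23 : Disjoint D2 D3)
    (hunion : D1 ∪ D2 ∪ D3 = T)
    (hD1w : ∑ i ∈ D1, w i ≤ c / 2)
    (hD2w : ∑ i ∈ D2, w i ≤ c / 2)
    (hD3w : ∑ i ∈ D3, w i ≤ c / 2)
    -- S : optimal solution set for capacity c/2 of the full instance
    (S : Finset ι)
    (hSfeas : ∑ i ∈ S, w i ≤ c / 2)
    (hSopt : ∀ U : Finset ι, ∑ i ∈ U, w i ≤ c / 2 → ∑ i ∈ U, p i ≤ ∑ i ∈ S, p i)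
    (hD3S : Disjoint D3 S) :
    max (max (∑ i ∈ D1, p i) (∑ i ∈ D2, p i)) (∑ i ∈ D3, p i) ≥
      (1 / 2) * ∑ i ∈ S, p i := by
  have hdisj : Disjoint (D1 ∪ D2) D3 := Finset.disjoint_union_left.mpr ⟨h13, h23⟩
  have hTp : ∑ i ∈ T, p i = ∑ i ∈ D1, p i + ∑ i ∈ D2, p i + ∑ i ∈ D3, p i := by
    rw [← hunion, Finset.sum_union hdisj, Finset.sum_union h12]
  have hSD3w : ∑ i ∈ S ∪ D3, w i ≤ c := by
    rw [Finset.sum_union hD3S.symm]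
    linarith
  have hkey := hTopt (S ∪ D3) hSD3w
  rw [Finset.sum_union hD3S.symm, hTp] at hkey
  -- P(S) ≤ P(D1) + P(D2)
  have h : ∑ i ∈ S, p i ≤ ∑ i ∈ D1, p i + ∑ i ∈ D2, p i := by linarith
  have hm : (1 / 2) * ∑ i ∈ S, p i ≤ max (∑ i ∈ D1, p i) (∑ i ∈ D2, p i) := by
    rcases le_total (∑ i ∈ D1, p i) (∑ i ∈ D2, p i) with hle | hle
    · rw [max_eq_right hle]; linarith
    · rw [max_eq_left hle]; linarith
  exact le_trans hm (le_max_left _ _)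
end

section
/- In the bottom-up iterative knapsack with all weights ≤ c/2: if the split item I_s relative to the ordering (items of Opt_c ∩ Opt_{c/2} first) exists and is not in Opt_{c/2}, then its profit satisfies p(I_s) ≤ min(P(Opt_{c/2}), P(A)), where A is the second-stage packing; consequently p(I_s) ≤ (1/2)·(P(Opt_{c/2}) + P(A)). -/
/-- The split item of the bottom-up iterative knapsack: an item of the optimal
capacity-`c` solution that is not in the optimal capacity-`c/2` solution has profit
at most `min(P(Opt_{c/2}), P(A))`, hence at most half of their sum. -/
theorem split_item_profit_bound {ι : Type*} [Fintype ι] [DecidableEq ι]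
    (p w : ι → ℝ) (c : ℝ)
    (hp : ∀ i, 0 ≤ p i) (hw : ∀ i, 0 < w i) (hwc : ∀ i, w i ≤ c / 2)
    -- S : optimal solution set for capacity c/2
    (S : Finset ι)
    (hSfeas : ∑ i ∈ S, w i ≤ c / 2)
    (hSopt : ∀ U : Finset ι, ∑ i ∈ U, w i ≤ c / 2 → ∑ i ∈ U, p i ≤ ∑ i ∈ S, p i)
    -- A : optimal second-stage packing of remaining items into capacity c - w(S)
    (A : Finset ι)
    (hAdisj : Disjoint A S)
    (hAfeas : ∑ i ∈ A, w i ≤ c - ∑ i ∈ S, w i)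
    (hAopt : ∀ B : Finset ι, Disjoint B S → ∑ i ∈ B, w i ≤ c - ∑ i ∈ S, w i →
      ∑ i ∈ B, p i ≤ ∑ i ∈ A, p i)
    -- T : optimal solution set for capacity c, and the split item Is ∈ T, Is ∉ S
    (T : Finset ι)
    (hTfeas : ∑ i ∈ T, w i ≤ c)
    (hTopt : ∀ U : Finset ι, ∑ i ∈ U, w i ≤ c → ∑ i ∈ U, p i ≤ ∑ i ∈ T, p i)
    (Is : ι) (hIsT : Is ∈ T) (hIsS : Is ∉ S) :
    p Is ≤ min (∑ i ∈ S, p i) (∑ i ∈ A, p i) ∧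
      p Is ≤ (1 / 2) * (∑ i ∈ S, p i + ∑ i ∈ A, p i) := by
  have h1 : p Is ≤ ∑ i ∈ S, p i := by
    have := hSopt {Is} (by simpa using hwc Is)
    simpa using this
  have h2 : p Is ≤ ∑ i ∈ A, p i := by
    have := hAopt {Is} (by simpa using hIsS)
      (by simp only [Finset.sum_singleton]; linarith [hwc Is, hSfeas])
    simpa using this
  exact ⟨le_min h1 h2, by linarith⟩
end

section
/- If in the bottom-up iterative knapsack no split item exists in Opt_c with respect to the ordering placing Opt_c ∩ Opt_{c/2} first (i.e., the prefix weight reaches exactly c/2), then the two-stage heuristic achieves the full optimum: P(heuristic) = P(Opt_c). -/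
/-- If no split item exists, i.e. the prefix (an optimal capacity-`c/2` solution `S`
contained in the optimal capacity-`c` solution `T`) has weight exactly `c/2`, then
the bottom-up two-stage heuristic achieves the full optimum. -/
theorem no_split_item_heuristic_optimal {ι : Type*} [Fintype ι] [DecidableEq ι]
    (p w : ι → ℝ) (c : ℝ)
    (hp : ∀ i, 0 ≤ p i) (hw : ∀ i, 0 < w i) (hwc : ∀ i, w i ≤ c / 2)
    -- T : optimal solution set for capacity c
    (T : Finset ι)
    (hTfeas : ∑ i ∈ T, w i ≤ c)
    (hTopt : ∀ U : Finset ι, ∑ i ∈ U, w i ≤ c → ∑ i ∈ U, p i ≤ ∑ i ∈ T, p i)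
    -- S : optimal solution set for capacity c/2, a prefix of T of weight exactly c/2
    (S : Finset ι) (hST : S ⊆ T)
    (hSw : ∑ i ∈ S, w i = c / 2)
    (hSopt : ∀ U : Finset ι, ∑ i ∈ U, w i ≤ c / 2 → ∑ i ∈ U, p i ≤ ∑ i ∈ S, p i)
    -- B : optimal second-stage packing
    (B : Finset ι)
    (hBdisj : Disjoint B S)
    (hBfeas : ∑ i ∈ B, w i ≤ c - ∑ i ∈ S, w i)
    (hBopt : ∀ B' : Finset ι, Disjoint B' S → ∑ i ∈ B', w i ≤ c - ∑ i ∈ S, w i →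
      ∑ i ∈ B', p i ≤ ∑ i ∈ B, p i) :
    ∑ i ∈ S, p i + ∑ i ∈ B, p i = ∑ i ∈ T, p i := by
  have hdisjSB : Disjoint S B := hBdisj.symm
  have h1 : ∑ i ∈ S, p i + ∑ i ∈ B, p i ≤ ∑ i ∈ T, p i := by
    have := hTopt (S ∪ B) (by
      rw [Finset.sum_union hdisjSB]; linarith)
    rwa [Finset.sum_union hdisjSB] at this
  have h2 : ∑ i ∈ T, p i ≤ ∑ i ∈ S, p i + ∑ i ∈ B, p i := by
    have hd : Disjoint (T \ S) S := Finset.sdiff_disjoint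
    have hw' : ∑ i ∈ T \ S, w i ≤ c - ∑ i ∈ S, w i := by
      have := Finset.sum_sdiff_eq_sub (f := w) hST
      linarith
    have := hBopt (T \ S) hd hw'
    have hp' : ∑ i ∈ T \ S, p i = ∑ i ∈ T, p i - ∑ i ∈ S, p i :=
      Finset.sum_sdiff_eq_sub (f := p) hST
    linarith
  linarith
end
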